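/- Define Π(x) = √((4-x)/(1-x)) - 2 and g_θ(x) = 1 - 3/((√((4-x)/(1-x)) + 1)² - 1) for x ∈ [0,1). Then g_θ(0) = 5/8, Π(g_θ(0)) = 1, and for every x ∈ [0,1): Π(g_θ(x)) - Π(g_θ(0)) = Π(x). -/

import Mathlib

/-- Generating function of the stationary measure. -/
noncomputable def PiFun (x : ℝ) : ℝ := Real.sqrt ((4 - x) / (1 - x)) - 2

/-- The offspring generating function of the skeleton decomposition. -/
noncomputable def gTheta (x : ℝ) : ℝ :=
  1 - 3 / ((Real.sqrt ((4 - x) / (1 - x)) + 1) ^ 2 - 1)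

lemma aux_key (x : ℝ) (hx0 : 0 ≤ x) (hx1 : x < 1) :
    PiFun (gTheta x) = Real.sqrt ((4 - x) / (1 - x)) - 1 := by
  set s := Real.sqrt ((4 - x) / (1 - x)) with hs
  have h1 : (0:ℝ) < 1 - x := by linarith
  have hnn : (0:ℝ) ≤ (4 - x) / (1 - x) := div_nonneg (by linarith) h1.le
  have hs2 : s ^ 2 = (4 - x) / (1 - x) := Real.sq_sqrt hnn
  have hsge : 2 ≤ s := by
    rw [hs]
    rw [show (2:ℝ) = Real.sqrt 4 by
      rw [show (4:ℝ) = 2^2 by norm_num, Real.sqrt_sq (by norm_num)]]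
    apply Real.sqrt_le_sqrt
    rw [le_div_iff₀ h1]; linarith
  have hpos : 0 < s ^ 2 + 2 * s := by nlinarith
  have hg : gTheta x = 1 - 3 / (s ^ 2 + 2 * s) := by
    rw [gTheta, ← hs]; ring_nf
  have h1g : 1 - gTheta x = 3 / (s ^ 2 + 2 * s) := by rw [hg]; ring
  have h4g : 4 - gTheta x = 3 * (s + 1) ^ 2 / (s ^ 2 + 2 * s) := by
    rw [hg]; field_simp; ring
  have hdiv : (4 - gTheta x) / (1 - gTheta x) = (s + 1) ^ 2 := by
    rw [h1g, h4g]
    field_simp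
  rw [PiFun, hdiv, Real.sqrt_sq (by linarith)]
  ring

theorem stmt_7 :
    gTheta 0 = 5 / 8 ∧ PiFun (gTheta 0) = 1 ∧
      ∀ x ∈ Set.Ico (0 : ℝ) 1, PiFun (gTheta x) - PiFun (gTheta 0) = PiFun x := by
  have hs0 : Real.sqrt ((4 - (0:ℝ)) / (1 - 0)) = 2 := by
    norm_num
  have hg0 : gTheta 0 = 5 / 8 := by rw [gTheta, hs0]; norm_num
  have hPi0 : PiFun (gTheta 0) = 1 := by
    rw [aux_key 0 le_rfl (by norm_num), hs0]; norm_num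
  refine ⟨hg0, hPi0, fun x hx => ?_⟩
  rw [aux_key x hx.1 hx.2, hPi0, PiFun]
  ring
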